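/- For every integer k > 1, there exists at least one k-translatable pentagonal quasigroup; one can take n = k⁴ − 2k³ + 4k² − 3k + 1, a = (−k³ + k² − 3k + 1) mod n, with multiplication x·y = (ax + (1−a)y) mod n. -/
import Mathlib


/-- A pentagonal quasigroup: a quasigroup (unique left/right division)
satisfying idempotency, mediality and the pentagonal identity. -/
def IsPentagonal {Q : Type*} (m : Q → Q → Q) : Prop :=
  (∀ a b : Q, ∃! x, m a x = b) ∧
  (∀ a b : Q, ∃! x, m x a = b) ∧
  (∀ x, m x x = x) ∧
  (∀ x y z u, m (m x y) (m z u) = m (m x z) (m y u)) ∧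
  (∀ x y, m (m (m (m x y) x) y) x = y)

/-- A groupoid on `ZMod n` is `k`-translatable if each row of the Cayley table is
the cyclic shift by `k` of the previous row, i.e. `i·j = (i+1)·(j+k)`. -/
def kTranslatable (n k : ℕ) (m : ZMod n → ZMod n → ZMod n) : Prop :=
  ∀ i j : ZMod n, m i j = m (i + 1) (j + (k : ZMod n))

theorem exists_k_translatable_pentagonal (k : ℕ) (hk : 1 < k) :
    ∃ (n : ℕ) (a : ZMod n),
      (n : ℤ) = (k : ℤ) ^ 4 - 2 * (k : ℤ) ^ 3 + 4 * (k : ℤ) ^ 2 - 3 * (k : ℤ) + 1 ∧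
      a = ((-(k : ℤ) ^ 3 + (k : ℤ) ^ 2 - 3 * (k : ℤ) + 1 : ℤ) : ZMod n) ∧
      IsPentagonal (fun x y : ZMod n => a * x + (1 - a) * y) ∧
      kTranslatable n k (fun x y : ZMod n => a * x + (1 - a) * y) := by
  have hk2 : 2 ≤ k := hk
  set n : ℕ := k ^ 4 + 4 * k ^ 2 + 1 - (2 * k ^ 3 + 3 * k) with hn
  have hle : 2 * k ^ 3 + 3 * k ≤ k ^ 4 + 4 * k ^ 2 + 1 := by nlinarith [mul_le_mul_left hk2 (k^3), mul_le_mul_left hk2 k, Nat.one_le_iff_ne_zero.mpr (by positivity : k^2 ≠ 0)]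
  have hncast : (n : ℤ) = (k : ℤ) ^ 4 - 2 * (k : ℤ) ^ 3 + 4 * (k : ℤ) ^ 2 - 3 * (k : ℤ) + 1 := by
    rw [hn]
    push_cast [hle]
    ring
  set a : ZMod n := ((-(k : ℤ) ^ 3 + (k : ℤ) ^ 2 - 3 * (k : ℤ) + 1 : ℤ) : ZMod n) with ha
  refine ⟨n, a, hncast, rfl, ?_, ?_⟩
  · -- key relations in ZMod n
    have hn0 : ((n : ℤ) : ZMod n) = 0 := by
      push_cast
      exact ZMod.natCast_self n
    set K : ZMod n := ((k : ℕ) : ZMod n) with hK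
    have hN : K ^ 4 - 2 * K ^ 3 + 4 * K ^ 2 - 3 * K + 1 = 0 := by
      rw [hncast] at hn0
      push_cast at hn0
      rw [hK]
      linear_combination hn0
    have haK : a = -K ^ 3 + K ^ 2 - 3 * K + 1 := by
      rw [ha]
      push_cast
      ring
    -- a is a unit
    have hau : a * (K ^ 3 - 2 * K ^ 2 + 4 * K - 2) = 1 := by
      rw [haK]
      linear_combination (-K ^ 2 + K - 3) * hN
    -- 1 - a is a unit
    have hbu : (1 - a) * (1 - K) = 1 := by
      rw [haK]
      linear_combination (-1 : ZMod n) * hN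
    -- pentagonal polynomial identity
    have hP : a ^ 4 - a ^ 3 + a ^ 2 - a + 1 = 0 := by
      rw [haK]
      linear_combination (K ^ 8 - 2 * K ^ 7 + 10 * K ^ 6 - 12 * K ^ 5 + 29 * K ^ 4
        - 18 * K ^ 3 + 25 * K ^ 2 - 3 * K + 1) * hN
    refine ⟨?_, ?_, ?_, ?_, ?_⟩
    · intro c b
      refine ⟨(1 - K) * (b - a * c), ?_, ?_⟩
      · simp only
        linear_combination (b - a * c) * hbu
      · intro y hy
        simp only at hy
        have : (1 - a) * y = b - a * c := by linear_combination hy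
        calc y = ((1 - a) * (1 - K)) * y := by rw [hbu]; ring
          _ = (1 - K) * ((1 - a) * y) := by ring
          _ = (1 - K) * (b - a * c) := by rw [this]
    · intro c b
      refine ⟨(K ^ 3 - 2 * K ^ 2 + 4 * K - 2) * (b - (1 - a) * c), ?_, ?_⟩
      · simp only
        linear_combination (b - (1 - a) * c) * hau
      · intro y hy
        simp only at hy
        have : a * y = b - (1 - a) * c := by linear_combination hy
        calc y = (a * (K ^ 3 - 2 * K ^ 2 + 4 * K - 2)) * y := by rw [hau]; ring
          _ = (K ^ 3 - 2 * K ^ 2 + 4 * K - 2) * (a * y) := by ring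
          _ = (K ^ 3 - 2 * K ^ 2 + 4 * K - 2) * (b - (1 - a) * c) := by rw [this]
    · intro x; simp only; ring
    · intro x y z u; simp only; ring
    · intro x y
      simp only
      linear_combination (x - y) * hP
  · intro i j
    simp only
    have hn0 : ((n : ℤ) : ZMod n) = 0 := by
      push_cast
      exact ZMod.natCast_self n
    rw [hncast] at hn0
    push_cast at hn0
    rw [ha]
    push_cast
    linear_combination -hn0
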